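/- Let A be a commutative ring and x ∈ A, and suppose A is derived x-complete as a module over itself. Let M be an A-module which is derived x-complete and such that the quotient M/xM is a finitely generated A-module. Then M is a finitely generated A-module. -/

import Mathlib

/-- An `A`-module `M` is *derived `x`-complete* if the derived inverse limit of the tower
`⋯ →(·x) M →(·x) M →(·x) M` of multiplication-by-`x` maps vanishes, i.e. both `lim` and
`lim¹` of this tower are zero.  Since `lim` and `lim¹` of the tower are respectively the
kernel and the cokernel of the map `∏_{n ∈ ℕ} M → ∏_{n ∈ ℕ} M` sending a sequence `(m_n)`
to `(m_n - x • m_{n+1})`, this is equivalent to that map being bijective. -/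
def IsDerivedComplete (A : Type*) [CommRing A] (x : A)
    (M : Type*) [AddCommGroup M] [Module A M] : Prop :=
  Function.Bijective (fun m : ℕ → M => fun n => m n - x • m (n + 1))

/-- Let `A` be a commutative ring and `x ∈ A`, and suppose `A` is derived
`x`-complete as a module over itself.  Let `M` be an `A`-module which is derived `x`-complete
and such that `M/xM` is a finitely generated `A`-module.  Then `M` is a finitely generated
`A`-module. -/
theorem finite_of_derivedComplete_of_finite_quotient {A : Type*} [CommRing A] (x : A)
    (hA : IsDerivedComplete A x A)
    (M : Type*) [AddCommGroup M] [Module A M]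
    (hM : IsDerivedComplete A x M)
    (hfg : Module.Finite A (M ⧸ (Ideal.span {x} • (⊤ : Submodule A M)))) :
    Module.Finite A M := by
  classical
  set p : Submodule A M := Ideal.span {x} • (⊤ : Submodule A M) with hp
  obtain ⟨s, hs⟩ := hfg.fg_top
  have hsurj := Submodule.mkQ_surjective p
  choose v hv using fun q : s => hsurj q.1
  set N : Submodule A M := Submodule.span A (Set.range v) with hN
  have step : ∀ m : M, ∃ q : M × M, q.1 ∈ N ∧ m = q.1 + x • q.2 := by
    intro m
    have hmap : Submodule.map p.mkQ N = ⊤ := by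
      rw [hN, Submodule.map_span, ← hs]
      congr 1
      ext q
      simp only [Set.mem_image, Set.mem_range, Finset.mem_coe, SetLike.mem_coe]
      constructor
      · rintro ⟨_, ⟨i, rfl⟩, rfl⟩; rw [hv]; exact i.2
      · intro hq; exact ⟨v ⟨q, hq⟩, ⟨_, rfl⟩, hv _⟩
    have hm : p.mkQ m ∈ Submodule.map p.mkQ N := by rw [hmap]; trivial
    obtain ⟨n, hn, hmn⟩ := hm
    have hmem : m - n ∈ p := (Submodule.Quotient.eq p).mp hmn.symm
    rw [hp, Submodule.ideal_span_singleton_smul] at hmem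
    obtain ⟨r, -, hr⟩ := hmem
    have hr' : x • r = m - n := hr
    exact ⟨(n, r), hn, by dsimp only; rw [hr']; abel⟩
  choose f hf1 hf2 using step
  have finite_of_mem_top : (⊤ : Submodule A M) ≤ N := by
    intro m _
    set seq : ℕ → M := fun k => ((fun t => (f t).2)^[k]) m with hseq
    have hseqsucc : ∀ k, seq (k + 1) = (f (seq k)).2 := fun k =>
      Function.iterate_succ_apply' _ _ _
    set c : ℕ → M := fun k => (f (seq k)).1 with hc
    have hT : ∀ k, seq k - x • seq (k + 1) = c k := by
      intro k
      rw [hseqsucc k]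
      exact sub_eq_of_eq_add (hf2 (seq k))
    choose a ha using fun k =>
      (Submodule.mem_span_range_iff_exists_fun A).mp (by rw [← hN]; exact hf1 (seq k) : c k ∈ Submodule.span A (Set.range v))
    choose b hb using fun i : s => hA.2 (fun k => a k i)
    set u : ℕ → M := fun k => ∑ i : s, b i k • v i with hu
    have hTu : ∀ k, u k - x • u (k + 1) = c k := by
      intro k
      rw [hu]
      simp only
      rw [Finset.smul_sum, ← Finset.sum_sub_distrib, ← ha k]
      refine Finset.sum_congr rfl fun i _ => ?_
      have := congrFun (hb i) k
      simp only [smul_eq_mul] at this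
      rw [smul_smul, ← sub_smul, this]
    have hueq : u = seq := hM.1 (by funext k; simp only; rw [hTu k, hT k])
    have : m = u 0 := by rw [hueq]; rfl
    rw [this, hu]
    exact Submodule.sum_mem _ fun i _ =>
      Submodule.smul_mem _ _ (Submodule.subset_span ⟨i, rfl⟩)
  have hNtop : N = ⊤ := le_antisymm le_top finite_of_mem_top
  refine ⟨?_⟩
  rw [← hNtop]
  exact Submodule.fg_span (Set.finite_range v)
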